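/- arXiv:1208.3827 — 2 statements merged into one kernel-verified Lean document; each statement's English description precedes it below -/
import Mathlib

section
/- The operators −∇²/2, R²/2 and 𝔼 + M/2 realize the Lie algebra sl(2): as linear operators on 𝒫 (and on C^∞(ℝ^m)⊗Λ_{2n}) one has the commutation relations [∇²/2, R²/2] = 𝔼 + M/2, [∇²/2, 𝔼 + M/2] = 2·(∇²/2), and [R²/2, 𝔼 + M/2] = −2·(R²/2). -/
/- ## Setup: super polynomials on ℝ^{m|2n} -/

open scoped TensorProduct

noncomputable section

set_option synthInstance.maxHeartbeats 1000000
set_option maxHeartbeats 1000000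

/-- The Grassmann algebra Λ_{2n} with 2n anticommuting generators, realized as the
exterior algebra of ℝ^{2n}. -/
abbrev GrassmannAlgebra (n : ℕ) : Type := ExteriorAlgebra ℝ (Fin (2*n) → ℝ)

/-- The algebra of super polynomials 𝒫 = ℝ[x_1,…,x_m] ⊗ Λ_{2n}. -/
abbrev SuperPoly (m n : ℕ) : Type := MvPolynomial (Fin m) ℝ ⊗[ℝ] GrassmannAlgebra n

instance (m n : ℕ) : Ring (SuperPoly m n) := Algebra.TensorProduct.instRing
instance (m n : ℕ) : Algebra ℝ (SuperPoly m n) := Algebra.TensorProduct.instAlgebra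

namespace SuperPoly

variable (m n : ℕ)

/-- The fermionic generator x`_j (0-indexed) of the Grassmann algebra. -/
def gen (j : Fin (2*n)) : GrassmannAlgebra n := ExteriorAlgebra.ι ℝ (Pi.single j 1)

/-- The bosonic variable x_i as a super polynomial. -/
def xb (i : Fin m) : SuperPoly m n := MvPolynomial.X i ⊗ₜ 1

/-- The fermionic variable x`_j (0-indexed) as a super polynomial. -/
def xf (j : Fin (2*n)) : SuperPoly m n := 1 ⊗ₜ gen n j

/-- The bosonic partial derivative ∂_{x_i}. -/
def Db (i : Fin m) : SuperPoly m n →ₗ[ℝ] SuperPoly m n :=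
  LinearMap.rTensor (GrassmannAlgebra n) (MvPolynomial.pderiv i).toLinearMap

/-- The fermionic partial derivative ∂_{x`_j} on Λ_{2n}: the unique odd (left) derivation
with ∂_{x`_j}(x`_k) = δ_{jk}, realized as contraction with the j-th dual basis vector. -/
def fdLam (j : Fin (2*n)) : GrassmannAlgebra n →ₗ[ℝ] GrassmannAlgebra n :=
  CliffordAlgebra.contractLeft (LinearMap.proj j)

/-- The fermionic partial derivative ∂_{x`_j} on 𝒫. -/
def Df (j : Fin (2*n)) : SuperPoly m n →ₗ[ℝ] SuperPoly m n :=
  LinearMap.lTensor (MvPolynomial (Fin m) ℝ) (fdLam n j)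

/-- Multiplication (on the left) by a super polynomial, as a linear operator. -/
def mulOp (a : SuperPoly m n) : SuperPoly m n →ₗ[ℝ] SuperPoly m n :=
  LinearMap.mulLeft ℝ a

/-- The index (0-based) `2j` among the fermionic indices. -/
def oddIdx (j : Fin n) : Fin (2*n) := ⟨2*j.1, by have := j.2; omega⟩

/-- The index (0-based) `2j+1` among the fermionic indices. -/
def evenIdx (j : Fin n) : Fin (2*n) := ⟨2*j.1+1, by have := j.2; omega⟩

/-- r² = Σ x_i². -/
def r2 : SuperPoly m n := ∑ i : Fin m, xb m n i * xb m n i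

/-- θ² = −Σ_{j=1}^n x`_{2j−1} x`_{2j}. -/
def θ2 : SuperPoly m n := - ∑ j : Fin n, xf m n (oddIdx n j) * xf m n (evenIdx n j)

/-- R² = r² + θ². -/
def R2 : SuperPoly m n := r2 m n + θ2 m n

/-- The bosonic Laplace operator ∇_b² = Σ ∂_{x_i}². -/
def lapB : SuperPoly m n →ₗ[ℝ] SuperPoly m n := ∑ i : Fin m, Db m n i ∘ₗ Db m n i

/-- The fermionic Laplace operator −4 Σ ∂_{x`_{2j−1}} ∂_{x`_{2j}}. -/
def lapF : SuperPoly m n →ₗ[ℝ] SuperPoly m n :=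
  (-4 : ℝ) • ∑ j : Fin n, Df m n (oddIdx n j) ∘ₗ Df m n (evenIdx n j)

/-- The super Laplace operator ∇² = ∇_b² − 4 Σ ∂_{x`_{2j−1}} ∂_{x`_{2j}}. -/
def lap : SuperPoly m n →ₗ[ℝ] SuperPoly m n := lapB m n + lapF m n

/-- The bosonic Euler operator 𝔼_b = Σ x_i ∂_{x_i}. -/
def eulerB : SuperPoly m n →ₗ[ℝ] SuperPoly m n :=
  ∑ i : Fin m, mulOp m n (xb m n i) ∘ₗ Db m n i

/-- The fermionic Euler operator 𝔼_f = Σ x`_j ∂_{x`_j}. -/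
def eulerF : SuperPoly m n →ₗ[ℝ] SuperPoly m n :=
  ∑ j : Fin (2*n), mulOp m n (xf m n j) ∘ₗ Df m n j

/-- The super Euler operator 𝔼. -/
def euler : SuperPoly m n →ₗ[ℝ] SuperPoly m n := eulerB m n + eulerF m n

/-- The space 𝒫_k of super polynomials homogeneous of degree k (eigenspace of 𝔼). -/
def Pdeg (k : ℕ) : Submodule ℝ (SuperPoly m n) :=
  LinearMap.ker (euler m n - (k : ℝ) • LinearMap.id)

/-- The space ℋ_k = 𝒫_k ∩ ker ∇² of spherical harmonics of degree k. -/
def Hdeg (k : ℕ) : Submodule ℝ (SuperPoly m n) :=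
  Pdeg m n k ⊓ LinearMap.ker (lap m n)

/-- The purely bosonic spherical harmonics ℋ_p^b of degree p (inside 𝒫). -/
def Hb (p : ℕ) : Submodule ℝ (SuperPoly m n) :=
  LinearMap.ker (lapB m n) ⊓ LinearMap.ker (eulerB m n - (p : ℝ) • LinearMap.id) ⊓
    LinearMap.ker (eulerF m n)

/-- The purely fermionic spherical harmonics ℋ_q^f of degree q (inside 𝒫). -/
def Hf (q : ℕ) : Submodule ℝ (SuperPoly m n) :=
  LinearMap.ker (lapF m n) ⊓ LinearMap.ker (eulerF m n - (q : ℝ) • LinearMap.id) ⊓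
    LinearMap.ker (eulerB m n)

/-! ### The orthosymplectic operators -/

/-- The supervector entry X_i, i = 1,…,m+2n (0-indexed). -/
def XV (i : Fin (m + 2*n)) : SuperPoly m n :=
  if h : i.1 < m then xb m n ⟨i.1, h⟩ else xf m n ⟨i.1 - m, by have := i.2; omega⟩

/-- The partial derivative ∂_{X_i}. -/
def DX (i : Fin (m + 2*n)) : SuperPoly m n →ₗ[ℝ] SuperPoly m n :=
  if h : i.1 < m then Db m n ⟨i.1, h⟩ else Df m n ⟨i.1 - m, by have := i.2; omega⟩

/-- (−1)^{[i]}: 1 on bosonic indices, −1 on fermionic indices. -/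
def sgn (i : Fin (m + 2*n)) : ℝ := if i.1 < m then 1 else -1

/-- (−1)^{[i][j]}. -/
def sgn2 (i j : Fin (m + 2*n)) : ℝ := if m ≤ i.1 ∧ m ≤ j.1 then -1 else 1

/-- The inverse g⁻¹ of the orthosymplectic metric g = diag(I_m, J), where J consists of n
diagonal 2×2 blocks (1/2)·[[0,−1],[1,0]]; so g⁻¹ = diag(I_m, J⁻¹) with J⁻¹ having
2×2 blocks [[0,2],[−2,0]]. -/
def ginv (i j : Fin (m + 2*n)) : ℝ :=
  if i.1 < m ∧ j.1 < m then (if i = j then 1 else 0)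
  else if m ≤ i.1 ∧ m ≤ j.1 then
    (if j.1 = i.1 + 1 ∧ (i.1 - m) % 2 = 0 then 2
     else if i.1 = j.1 + 1 ∧ (j.1 - m) % 2 = 0 then -2 else 0)
  else 0

/-- ∇_i = Σ_j (g⁻¹)_{ji} (−1)^{[j]} ∂_{X_j}. -/
def nabla (i : Fin (m + 2*n)) : SuperPoly m n →ₗ[ℝ] SuperPoly m n :=
  ∑ j : Fin (m + 2*n), (ginv m n j i * sgn m n j) • DX m n j

/-- The orthosymplectic operator L_{ij} = X_i ∇_j − (−1)^{[i][j]} X_j ∇_i. -/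
def Lop (i j : Fin (m + 2*n)) : SuperPoly m n →ₗ[ℝ] SuperPoly m n :=
  mulOp m n (XV m n i) ∘ₗ nabla m n j - sgn2 m n i j • (mulOp m n (XV m n j) ∘ₗ nabla m n i)

/-- A subspace is 𝔬𝔰𝔭(m|2n)-invariant if it is stable under all L_{ij}, i ≤ j. -/
def IsInv (W : Submodule ℝ (SuperPoly m n)) : Prop :=
  ∀ i j : Fin (m + 2*n), i ≤ j → ∀ w ∈ W, Lop m n i j w ∈ W

/-! ### The polynomials f_{k,p,q} -/

/-- The coefficient a_s of `f_{k,p,q}`. -/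
def acoef (k p q s : ℕ) : ℝ :=
  (Nat.choose k s : ℝ) * ((Nat.factorial (n - q - s) : ℝ) / (Nat.factorial (n - q - k) : ℝ)) *
    (Real.Gamma ((m:ℝ)/2 + p + k) / Real.Gamma ((m:ℝ)/2 + p + k - s))

/-- The polynomial f_{k,p,q} = Σ_s a_s r^{2k−2s} θ^{2s}. -/
def fkpq (k p q : ℕ) : SuperPoly m n :=
  ∑ s ∈ Finset.range (k+1), acoef m n k p q s • (r2 m n ^ (k - s) * θ2 m n ^ s)

/-- The 𝔰𝔬(m)⊕𝔰𝔭(2n)-component f_{l,p,q}·ℋ_p^b·ℋ_q^f of ℋ_{2l+p+q} (the span of the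
products f_{l,p,q} H_p H_q with H_p ∈ ℋ_p^b, H_q ∈ ℋ_q^f). -/
def comp (l p q : ℕ) : Submodule ℝ (SuperPoly m n) :=
  Submodule.span ℝ {fkpq m n l p q} * Hb m n p * Hf m n q

end SuperPoly



section AbstractRing
variable {A : Type*} [Ring A]

private lemma shiftb {d x : A} (h : d * x = x * d + 1) (y : A) :
    d * (x * y) = x * (d * y) + y := by
  rw [← mul_assoc, h, add_mul, one_mul, mul_assoc]

private lemma shift1 {a p : A} (h : a * p = 1 - p * a) (y : A) :
    a * (p * y) = y - p * (a * y) := by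
  rw [← mul_assoc, h, sub_mul, one_mul, mul_assoc]

private lemma shift2 {a p : A} (h : a * p = -(p * a)) (y : A) :
    a * (p * y) = -(p * (a * y)) := by
  rw [← mul_assoc, h, neg_mul, mul_assoc]

private lemma shift0 {a : A} (h : a * a = 0) (y : A) : a * (a * y) = 0 := by
  rw [← mul_assoc, h, zero_mul]

private lemma bosonA_diag (d x : A) (h : d * x = x * d + 1) :
    d * d * (x * x) - x * x * (d * d) = 4 * (x * d) + 2 := by
  simp only [mul_assoc, shiftb h, h, mul_add, add_mul, mul_one, one_mul]
  noncomm_ring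
  simp [nsmul_eq_mul]

private lemma bosonB_diag (d x : A) (h : d * x = x * d + 1) :
    d * d * (x * d) - x * d * (d * d) = 2 * (d * d) := by
  simp only [mul_assoc, shiftb h, h, mul_add, add_mul, mul_one, one_mul]
  noncomm_ring

private lemma bosonC_diag (d x : A) (h : d * x = x * d + 1) :
    x * x * (x * d) - x * d * (x * x) = -(2 * (x * x)) := by
  have h' : ∀ y, d * (x * y) = x * (d * y) + y := shiftb h
  simp only [mul_assoc, h', h, mul_add, add_mul, mul_one, one_mul]
  noncomm_ring

private lemma fermA_diag (a b p q : A) (hap : a * p = 1 - p * a) (hbq : b * q = 1 - q * b)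
    (haq : a * q = -(q * a)) (hbp : b * p = -(p * b)) :
    a * b * (p * q) - p * q * (a * b) = p * a + q * b - 1 := by
  simp only [mul_assoc, shift1 hap, shift1 hbq, shift2 haq, shift2 hbp, hap, hbq, haq, hbp,
    mul_add, add_mul, mul_sub, sub_mul, mul_one, one_mul, mul_neg, neg_mul, neg_neg]
  noncomm_ring

private lemma fermB_diag1 (a b g : A) (hag : a * g = 1 - g * a) (hbg : b * g = -(g * b))
    (hba : b * a = -(a * b)) (ha2 : a * a = 0) :
    a * b * (g * a) - g * a * (a * b) = a * b := by
  simp only [mul_assoc, shift1 hag, shift2 hbg, shift2 hba, shift0 ha2, hag, hbg, hba, ha2,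
    mul_add, add_mul, mul_sub, sub_mul, mul_one, one_mul, mul_neg, neg_mul, neg_neg,
    mul_zero, zero_mul, sub_zero, neg_zero, add_zero, zero_add]
  try noncomm_ring

private lemma fermB_diag2 (a b g : A) (hbg : b * g = 1 - g * b) (hag : a * g = -(g * a))
    (hba : b * a = -(a * b)) (hb2 : b * b = 0) :
    a * b * (g * b) - g * b * (a * b) = a * b := by
  simp only [mul_assoc, shift1 hbg, shift2 hag, shift2 hba, shift0 hb2, hbg, hag, hba, hb2,
    mul_add, add_mul, mul_sub, sub_mul, mul_one, one_mul, mul_neg, neg_mul, neg_neg,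
    mul_zero, zero_mul, sub_zero, neg_zero, add_zero, zero_add]
  try noncomm_ring

private lemma fermC_diag1 (p q a : A) (hap : a * p = 1 - p * a) (hqp : q * p = -(p * q))
    (hp2 : p * p = 0) :
    p * q * (p * a) - p * a * (p * q) = -(p * q) := by
  simp only [mul_assoc, shift1 hap, shift2 hqp, shift0 hp2, hap, hqp, hp2,
    mul_add, add_mul, mul_sub, sub_mul, mul_one, one_mul, mul_neg, neg_mul, neg_neg,
    mul_zero, zero_mul, sub_zero, neg_zero, add_zero, zero_add]
  try noncomm_ring

private lemma fermC_diag2 (p q b : A) (hbq : b * q = 1 - q * b) (hbp : b * p = -(p * b))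
    (hqp : q * p = -(p * q)) (hq2 : q * q = 0) :
    p * q * (q * b) - q * b * (p * q) = -(p * q) := by
  simp only [mul_assoc, shift1 hbq, shift2 hbp, shift2 hqp, shift0 hq2, hbq, hbp, hqp, hq2,
    mul_add, add_mul, mul_sub, sub_mul, mul_one, one_mul, mul_neg, neg_mul, neg_neg,
    mul_zero, zero_mul, sub_zero, neg_zero, add_zero, zero_add]
  try noncomm_ring

private lemma anticomm_pair {x y p : A} (hx : x * p = -(p * x)) (hy : y * p = -(p * y)) :
    Commute (x * y) p := by
  have : x * y * p = p * (x * y) := by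
    rw [mul_assoc, hy, mul_neg, shift2 hx, neg_neg]
  exact this

private lemma comm_zero {u v : A} (h : Commute u v) : u * v - v * u = 0 := by
  rw [h.eq, sub_self]

section Helper
variable {A : Type*} [Ring A]

private lemma comm_sum_sum {ι κ : Type*} [Fintype ι] [Fintype κ]
    (f : ι → A) (g : κ → A) (w : ι → κ → A)
    (h : ∀ i k, f i * g k - g k * f i = w i k) :
    (∑ i, f i) * (∑ k, g k) - (∑ k, g k) * (∑ i, f i) = ∑ i, ∑ k, w i k := by
  have h1 : (∑ i, f i) * (∑ k, g k) = ∑ i, ∑ k, f i * g k := by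
    rw [Finset.sum_mul]; exact Finset.sum_congr rfl fun i _ => Finset.mul_sum _ _ _
  have h2 : (∑ k, g k) * (∑ i, f i) = ∑ i, ∑ k, g k * f i := by
    rw [Finset.mul_sum]; exact Finset.sum_congr rfl fun i _ => Finset.sum_mul _ _ _
  rw [h1, h2, ← Finset.sum_sub_distrib]
  refine Finset.sum_congr rfl fun i _ => ?_
  rw [← Finset.sum_sub_distrib]
  exact Finset.sum_congr rfl fun k _ => h i k

end Helper

section SmulHelpers
variable {A : Type*} [Ring A] [Algebra ℝ A]

private lemma rsmul2' (x : A) : (2:ℝ) • x = 2 * x := by rw [Algebra.smul_def, map_ofNat]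
private lemma rsmul4' (x : A) : (4:ℝ) • x = 4 * x := by rw [Algebra.smul_def, map_ofNat]

private lemma rsmul2 {M : Type*} [AddCommGroup M] [Module ℝ M] (f : Module.End ℝ M) :
    (2:ℝ) • f = 2 * f := rsmul2' f
private lemma rsmul4 {M : Type*} [AddCommGroup M] [Module ℝ M] (f : Module.End ℝ M) :
    (4:ℝ) • f = 4 * f := rsmul4' f

private lemma rsmuln2' (x : A) : (-2:ℝ) • x = -(2 * x) := by
  rw [show (-2:ℝ) = -(2:ℝ) by norm_num, neg_smul, rsmul2']
private lemma rsmuln2 {M : Type*} [AddCommGroup M] [Module ℝ M] (f : Module.End ℝ M) :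
    (-2:ℝ) • f = -(2 * f) := rsmuln2' f

private lemma nsmul_one_eq (k : ℕ) : (k : ℝ) • (1 : A) = k • (1 : A) := by
  rw [Nat.cast_smul_eq_nsmul]

end SmulHelpers

open MvPolynomial in
private lemma my_pderiv_comm {m : ℕ} (i j : Fin m) (p : MvPolynomial (Fin m) ℝ) :
    pderiv i (pderiv j p) = pderiv j (pderiv i p) := by
  induction p using MvPolynomial.induction_on with
  | C a => simp
  | add p q hp hq => simp [hp, hq]
  | mul_X p k hp =>
    simp only [pderiv_mul, hp, map_add, map_mul, pderiv_X, Pi.single_apply,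
      apply_ite (MvPolynomial.pderiv i), apply_ite (MvPolynomial.pderiv j), pderiv_one, map_zero]
    split_ifs <;> ring

section Boson
variable {m : ℕ}

private abbrev Pm (m : ℕ) := MvPolynomial (Fin m) ℝ

private noncomputable def Dp (i : Fin m) : Module.End ℝ (Pm m) := (MvPolynomial.pderiv i).toLinearMap
private noncomputable def Xm (i : Fin m) : Module.End ℝ (Pm m) := LinearMap.mulLeft ℝ (MvPolynomial.X i)

private lemma relDX (i k : Fin m) :
    Dp i * Xm k = Xm k * Dp i + (if i = k then 1 else 0) := by
  ext p
  by_cases h : i = k <;>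
    simp [h, Dp, Xm, Module.End.mul_apply, MvPolynomial.pderiv_mul]

private lemma relDD (i k : Fin m) : Dp i * Dp k = Dp k * Dp i := by
  refine LinearMap.ext fun p => ?_
  simpa [Dp, Module.End.mul_apply] using my_pderiv_comm i k p

private lemma relXX (i k : Fin m) : Xm i * Xm k = Xm k * Xm i := by
  ext p; simp [Xm, Module.End.mul_apply, mul_assoc, mul_left_comm (MvPolynomial.X i)]

private lemma commDX {i k : Fin m} (h : i ≠ k) : Commute (Dp i) (Xm k) := by
  have := relDX i k; rw [if_neg h, add_zero] at this; exact this

private noncomputable def LbE (m : ℕ) : Module.End ℝ (Pm m) := ∑ i, Dp i * Dp i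
private noncomputable def RbE (m : ℕ) : Module.End ℝ (Pm m) := ∑ i, Xm i * Xm i
private noncomputable def EbE (m : ℕ) : Module.End ℝ (Pm m) := ∑ i, Xm i * Dp i

private lemma PB_A : LbE m * RbE m - RbE m * LbE m
    = (4:ℝ) • EbE m + (2*m) • (1 : Module.End ℝ (Pm m)) := by
  have h : ∀ i k : Fin m, (Dp i * Dp i) * (Xm k * Xm k) - (Xm k * Xm k) * (Dp i * Dp i)
      = if k = i then 4*(Xm i * Dp i) + 2 else 0 := by
    intro i k
    by_cases hik : k = i
    · subst hik; rw [if_pos rfl]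
      have h := relDX k k; rw [if_pos rfl] at h
      exact bosonA_diag _ _ h
    · rw [if_neg hik]
      have h1 : Commute (Dp i) (Xm k) := commDX fun e => hik e.symm
      exact comm_zero ((h1.mul_left h1).mul_right (h1.mul_left h1))
  rw [LbE, RbE, comm_sum_sum _ _ _ h]
  simp only [Finset.sum_ite_eq' Finset.univ, Finset.mem_univ, if_true]
  rw [Finset.sum_add_distrib, ← Finset.mul_sum, Finset.sum_const, Finset.card_univ,
    Fintype.card_fin, ← EbE]
  rw [rsmul4]
  rw [show ((2*m) • (1 : Module.End ℝ (Pm m))) = m • (2 : Module.End ℝ (Pm m)) by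
    rw [show (2 : Module.End ℝ (Pm m)) = (2:ℕ) • (1 : Module.End ℝ (Pm m)) by simp,
      smul_smul, mul_comm]]

private lemma PB_B : LbE m * EbE m - EbE m * LbE m = (2:ℝ) • LbE m := by
  have h : ∀ i k : Fin m, (Dp i * Dp i) * (Xm k * Dp k) - (Xm k * Dp k) * (Dp i * Dp i)
      = if k = i then 2*(Dp i * Dp i) else 0 := by
    intro i k
    by_cases hik : k = i
    · subst hik; rw [if_pos rfl]
      have h := relDX k k; rw [if_pos rfl] at h
      exact bosonB_diag _ _ h
    · rw [if_neg hik]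
      have h1 : Commute (Dp i) (Xm k) := commDX fun e => hik e.symm
      have h2 : Commute (Dp i) (Dp k) := relDD i k
      exact comm_zero ((h1.mul_left h1).mul_right (h2.mul_left h2))
  rw [LbE, EbE, comm_sum_sum _ _ _ h]
  simp only [Finset.sum_ite_eq' Finset.univ, Finset.mem_univ, if_true]
  rw [← Finset.mul_sum, ← LbE, rsmul2]

private lemma PB_C : RbE m * EbE m - EbE m * RbE m = (-2:ℝ) • RbE m := by
  have h : ∀ i k : Fin m, (Xm i * Xm i) * (Xm k * Dp k) - (Xm k * Dp k) * (Xm i * Xm i)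
      = if k = i then -(2*(Xm i * Xm i)) else 0 := by
    intro i k
    by_cases hik : k = i
    · subst hik; rw [if_pos rfl]
      have h := relDX k k; rw [if_pos rfl] at h
      exact bosonC_diag _ _ h
    · rw [if_neg hik]
      have h1 : Commute (Xm i) (Xm k) := relXX i k
      have h2 : Commute (Xm i) (Dp k) := (commDX fun e => hik e).symm
      exact comm_zero ((h1.mul_left h1).mul_right (h2.mul_left h2))
  rw [RbE, EbE, comm_sum_sum _ _ _ h]
  simp only [Finset.sum_ite_eq' Finset.univ, Finset.mem_univ, if_true]
  rw [Finset.sum_neg_distrib, ← Finset.mul_sum, ← RbE, rsmuln2]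

section Ferm
variable {n : ℕ}

private def dE (j : Fin (2*n)) : Module.End ℝ (GrassmannAlgebra n) := SuperPoly.fdLam n j
private def gE (j : Fin (2*n)) : Module.End ℝ (GrassmannAlgebra n) :=
  LinearMap.mulLeft ℝ (SuperPoly.gen n j)

private lemma relDG (j k : Fin (2*n)) :
    dE j * gE k = (if j = k then 1 else 0) - gE k * dE j := by
  refine LinearMap.ext fun w => ?_
  have h := CliffordAlgebra.contractLeft_ι_mul (LinearMap.proj j (R := ℝ)
      (φ := fun _ : Fin (2*n) => ℝ)) (Pi.single k 1) w
  simp only [dE, gE, SuperPoly.fdLam, SuperPoly.gen, Module.End.mul_apply,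
    LinearMap.mulLeft_apply, LinearMap.sub_apply]
  rw [h]
  have : (LinearMap.proj (R := ℝ) (φ := fun _ : Fin (2*n) => ℝ) j) (Pi.single k (1:ℝ)) = if j = k then (1:ℝ) else 0 := by
    simp [Pi.single_apply, eq_comm]
  rw [this]
  by_cases hjk : j = k <;> simp [hjk]

private lemma relDGd (j : Fin (2*n)) : dE j * gE j = 1 - gE j * dE j := by
  have := relDG j j; rwa [if_pos rfl] at this

private lemma relDGn {j k : Fin (2*n)} (h : j ≠ k) : dE j * gE k = -(gE k * dE j) := by
  have := relDG j k; rwa [if_neg h, zero_sub] at this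

private lemma relGDn {j k : Fin (2*n)} (h : k ≠ j) : gE k * dE j = -(dE j * gE k) := by
  rw [relDGn (fun e => h e.symm), neg_neg]

private lemma relDDf (j k : Fin (2*n)) : dE j * dE k = -(dE k * dE j) := by
  refine LinearMap.ext fun w => ?_
  simpa [dE, SuperPoly.fdLam, Module.End.mul_apply] using
    CliffordAlgebra.contractLeft_comm (LinearMap.proj j) (LinearMap.proj k) w

private lemma relD0 (j : Fin (2*n)) : dE j * dE j = 0 := by
  refine LinearMap.ext fun w => ?_
  simpa [dE, SuperPoly.fdLam, Module.End.mul_apply] using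
    CliffordAlgebra.contractLeft_contractLeft (LinearMap.proj j) w

private lemma genmul (j k : Fin (2*n)) :
    SuperPoly.gen n j * SuperPoly.gen n k = -(SuperPoly.gen n k * SuperPoly.gen n j) := by
  have := ExteriorAlgebra.ι_add_mul_swap (R := ℝ) (Pi.single j (1:ℝ) : Fin (2*n) → ℝ) (Pi.single k 1)
  rw [SuperPoly.gen, SuperPoly.gen]
  linear_combination (norm := noncomm_ring) this

private lemma relGGf (j k : Fin (2*n)) : gE j * gE k = -(gE k * gE j) := by
  refine LinearMap.ext fun w => ?_
  simp only [gE, Module.End.mul_apply, LinearMap.mulLeft_apply, LinearMap.neg_apply,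
    ← mul_assoc, genmul j k, neg_mul]

private lemma relG0 (j : Fin (2*n)) : gE j * gE j = 0 := by
  refine LinearMap.ext fun w => ?_
  simp only [gE, Module.End.mul_apply, LinearMap.mulLeft_apply, LinearMap.zero_apply,
    ← mul_assoc, SuperPoly.gen, ExteriorAlgebra.ι_sq_zero, zero_mul]

-- index lemmas
private lemma oo_iff (j k : Fin n) : SuperPoly.oddIdx n j = SuperPoly.oddIdx n k ↔ j = k := by
  simp only [SuperPoly.oddIdx, Fin.ext_iff]; omega
private lemma ee_iff (j k : Fin n) : SuperPoly.evenIdx n j = SuperPoly.evenIdx n k ↔ j = k := by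
  simp only [SuperPoly.evenIdx, Fin.ext_iff]; omega
private lemma oe_ne (j k : Fin n) : SuperPoly.oddIdx n j ≠ SuperPoly.evenIdx n k := by
  simp only [SuperPoly.oddIdx, SuperPoly.evenIdx, Fin.ext_iff, ne_eq]; omega
private lemma eo_ne (j k : Fin n) : SuperPoly.evenIdx n j ≠ SuperPoly.oddIdx n k :=
  fun h => oe_ne k j h.symm


private lemma sum_range_even_odd {M : Type*} [AddCommMonoid M] (f : ℕ → M) (n : ℕ) :
    ∑ k ∈ Finset.range (2*n), f k = ∑ j ∈ Finset.range n, (f (2*j) + f (2*j+1)) := by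
  induction n with
  | zero => simp
  | succ n ih =>
    rw [show 2*(n+1) = (2*n)+1+1 by ring, Finset.sum_range_succ, Finset.sum_range_succ, ih,
      Finset.sum_range_succ]
    abel

private lemma fin_sum_even_odd {n : ℕ} {M : Type*} [AddCommMonoid M] (F : Fin (2*n) → M) :
    ∑ k, F k = ∑ j : Fin n, (F (SuperPoly.oddIdx n j) + F (SuperPoly.evenIdx n j)) := by
  set f : ℕ → M := fun k => if h : k < 2*n then F ⟨k, h⟩ else 0 with hf
  have h1 : ∑ k, F k = ∑ k ∈ Finset.range (2*n), f k := by
    rw [Finset.sum_range]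
    exact Finset.sum_congr rfl fun k _ => by simp [hf, k.2]
  have h2 : ∑ j : Fin n, (F (SuperPoly.oddIdx n j) + F (SuperPoly.evenIdx n j))
      = ∑ j ∈ Finset.range n, (f (2*j) + f (2*j+1)) := by
    rw [Finset.sum_range]
    refine Finset.sum_congr rfl fun j _ => ?_
    have hj1 : 2*(j:ℕ) < 2*n := by omega
    have hj2 : 2*(j:ℕ)+1 < 2*n := by omega
    simp only [hf, dif_pos hj1, dif_pos hj2]
    rfl
  rw [h1, h2, sum_range_even_odd]
end Ferm

section FermSums
variable {n : ℕ}

private noncomputable def SEn (n : ℕ) : Module.End ℝ (GrassmannAlgebra n) :=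
  ∑ j : Fin n, dE (SuperPoly.oddIdx n j) * dE (SuperPoly.evenIdx n j)
private noncomputable def TEn (n : ℕ) : Module.End ℝ (GrassmannAlgebra n) :=
  ∑ j : Fin n, gE (SuperPoly.oddIdx n j) * gE (SuperPoly.evenIdx n j)
private noncomputable def EfE (n : ℕ) : Module.End ℝ (GrassmannAlgebra n) :=
  ∑ k : Fin (2*n), gE k * dE k

private lemma PF_A : SEn n * TEn n - TEn n * SEn n
    = EfE n - n • (1 : Module.End ℝ (GrassmannAlgebra n)) := by
  have h : ∀ j k : Fin n,
      (dE (SuperPoly.oddIdx n j) * dE (SuperPoly.evenIdx n j))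
        * (gE (SuperPoly.oddIdx n k) * gE (SuperPoly.evenIdx n k))
      - (gE (SuperPoly.oddIdx n k) * gE (SuperPoly.evenIdx n k))
        * (dE (SuperPoly.oddIdx n j) * dE (SuperPoly.evenIdx n j))
      = if k = j then (gE (SuperPoly.oddIdx n j) * dE (SuperPoly.oddIdx n j)
          + gE (SuperPoly.evenIdx n j) * dE (SuperPoly.evenIdx n j) - 1) else 0 := by
    intro j k
    by_cases hjk : k = j
    · subst hjk; rw [if_pos rfl]
      exact fermA_diag _ _ _ _ (relDGd _) (relDGd _)
        (relDGn (oe_ne k k)) (relDGn (eo_ne k k))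
    · rw [if_neg hjk]
      have h1 := anticomm_pair (relDGn (fun e => hjk ((oo_iff j k).mp e).symm))
        (relDGn (eo_ne j k))
      have h2 := anticomm_pair (relDGn (oe_ne j k))
        (relDGn (fun e => hjk ((ee_iff j k).mp e).symm))
      exact comm_zero (h1.mul_right h2)
  rw [SEn, TEn, comm_sum_sum _ _ _ h]
  simp only [Finset.sum_ite_eq' Finset.univ, Finset.mem_univ, if_true]
  rw [Finset.sum_sub_distrib, Finset.sum_const, Finset.card_univ, Fintype.card_fin,
    EfE, fin_sum_even_odd (fun k => gE k * dE k)]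

private lemma PF_B : SEn n * EfE n - EfE n * SEn n = SEn n + SEn n := by
  have h : ∀ j : Fin n, ∀ k : Fin (2*n),
      (dE (SuperPoly.oddIdx n j) * dE (SuperPoly.evenIdx n j)) * (gE k * dE k)
      - (gE k * dE k) * (dE (SuperPoly.oddIdx n j) * dE (SuperPoly.evenIdx n j))
      = (if k = SuperPoly.oddIdx n j
            then dE (SuperPoly.oddIdx n j) * dE (SuperPoly.evenIdx n j) else 0)
        + (if k = SuperPoly.evenIdx n j
            then dE (SuperPoly.oddIdx n j) * dE (SuperPoly.evenIdx n j) else 0) := by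
    intro j k
    by_cases h1 : k = SuperPoly.oddIdx n j
    · subst h1
      rw [if_pos rfl, if_neg (oe_ne j j), add_zero]
      exact fermB_diag1 _ _ _ (relDGd _) (relDGn (eo_ne j j)) (relDDf _ _) (relD0 _)
    · by_cases h2 : k = SuperPoly.evenIdx n j
      · subst h2
        rw [if_neg (eo_ne j j), if_pos rfl, zero_add]
        exact fermB_diag2 _ _ _ (relDGd _) (relDGn (oe_ne j j)) (relDDf _ _) (relD0 _)
      · rw [if_neg h1, if_neg h2, add_zero]
        have ho := anticomm_pair (relDGn (fun e => h1 e.symm)) (relDGn (fun e => h2 e.symm))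
        have hd := anticomm_pair (relDDf (SuperPoly.oddIdx n j) k)
          (relDDf (SuperPoly.evenIdx n j) k)
        exact comm_zero (ho.mul_right hd)
  rw [SEn, EfE, comm_sum_sum _ _ _ h, ← SEn]
  have inner : ∀ j : Fin n, (∑ k : Fin (2*n),
      ((if k = SuperPoly.oddIdx n j
          then dE (SuperPoly.oddIdx n j) * dE (SuperPoly.evenIdx n j) else 0)
        + (if k = SuperPoly.evenIdx n j
          then dE (SuperPoly.oddIdx n j) * dE (SuperPoly.evenIdx n j) else 0)))
      = dE (SuperPoly.oddIdx n j) * dE (SuperPoly.evenIdx n j)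
        + dE (SuperPoly.oddIdx n j) * dE (SuperPoly.evenIdx n j) := fun j => by
    rw [Finset.sum_add_distrib]
    simp [Finset.sum_ite_eq' Finset.univ]
  exact (Finset.sum_congr rfl fun j _ => inner j).trans
    (by rw [Finset.sum_add_distrib, SEn])

private lemma PF_C : TEn n * EfE n - EfE n * TEn n = -TEn n + -TEn n := by
  have h : ∀ j : Fin n, ∀ k : Fin (2*n),
      (gE (SuperPoly.oddIdx n j) * gE (SuperPoly.evenIdx n j)) * (gE k * dE k)
      - (gE k * dE k) * (gE (SuperPoly.oddIdx n j) * gE (SuperPoly.evenIdx n j))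
      = (if k = SuperPoly.oddIdx n j
            then -(gE (SuperPoly.oddIdx n j) * gE (SuperPoly.evenIdx n j)) else 0)
        + (if k = SuperPoly.evenIdx n j
            then -(gE (SuperPoly.oddIdx n j) * gE (SuperPoly.evenIdx n j)) else 0) := by
    intro j k
    by_cases h1 : k = SuperPoly.oddIdx n j
    · subst h1
      rw [if_pos rfl, if_neg (oe_ne j j), add_zero]
      exact fermC_diag1 _ _ _ (relDGd _) (relGGf _ _) (relG0 _)
    · by_cases h2 : k = SuperPoly.evenIdx n j
      · subst h2
        rw [if_neg (eo_ne j j), if_pos rfl, zero_add]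
        exact fermC_diag2 _ _ _ (relDGd _) (relDGn (eo_ne j j)) (relGGf _ _) (relG0 _)
      · rw [if_neg h1, if_neg h2, add_zero]
        have ho := anticomm_pair (relGGf (SuperPoly.oddIdx n j) k)
          (relGGf (SuperPoly.evenIdx n j) k)
        have hd := anticomm_pair (relGDn (fun e => h1 e.symm))
          (relGDn (fun e => h2 e.symm))
        exact comm_zero (ho.mul_right hd)
  rw [TEn, EfE, comm_sum_sum _ _ _ h, ← TEn]
  have inner : ∀ j : Fin n, (∑ k : Fin (2*n),
      ((if k = SuperPoly.oddIdx n j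
          then -(gE (SuperPoly.oddIdx n j) * gE (SuperPoly.evenIdx n j)) else 0)
        + (if k = SuperPoly.evenIdx n j
          then -(gE (SuperPoly.oddIdx n j) * gE (SuperPoly.evenIdx n j)) else 0)))
      = -(gE (SuperPoly.oddIdx n j) * gE (SuperPoly.evenIdx n j))
        + -(gE (SuperPoly.oddIdx n j) * gE (SuperPoly.evenIdx n j)) := fun j => by
    rw [Finset.sum_add_distrib]
    simp [Finset.sum_ite_eq' Finset.univ]
  exact (Finset.sum_congr rfl fun j _ => inner j).trans
    (by rw [Finset.sum_add_distrib, Finset.sum_neg_distrib, TEn])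

end FermSums


section Transport
open SuperPoly
variable (m n : ℕ)

private noncomputable def rT : Module.End ℝ (Pm m) →ₗ[ℝ] Module.End ℝ (SuperPoly m n) :=
  LinearMap.rTensorHom (GrassmannAlgebra n)
private noncomputable def lT : Module.End ℝ (GrassmannAlgebra n) →ₗ[ℝ]
    Module.End ℝ (SuperPoly m n) :=
  LinearMap.lTensorHom (MvPolynomial (Fin m) ℝ)

private lemma rT_apply (f : Module.End ℝ (Pm m)) :
    rT m n f = LinearMap.rTensor (GrassmannAlgebra n) f := rfl
private lemma lT_apply (g : Module.End ℝ (GrassmannAlgebra n)) :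
    lT m n g = LinearMap.lTensor (MvPolynomial (Fin m) ℝ) g := rfl

private lemma rT_mul (f g : Module.End ℝ (Pm m)) :
    rT m n (f * g) = rT m n f * rT m n g := by
  simp only [rT_apply, Module.End.mul_eq_comp]
  exact LinearMap.rTensor_comp _ _ _

private lemma lT_mul (f g : Module.End ℝ (GrassmannAlgebra n)) :
    lT m n (f * g) = lT m n f * lT m n g := by
  simp only [lT_apply, Module.End.mul_eq_comp]
  exact LinearMap.lTensor_comp _ _ _

private lemma rT_one : rT m n 1 = 1 := by
  simp only [rT_apply, Module.End.one_eq_id]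
  exact LinearMap.rTensor_id _ _

private lemma lT_one : lT m n 1 = 1 := by
  simp only [lT_apply, Module.End.one_eq_id]
  exact LinearMap.lTensor_id _ _

private lemma cross (f : Module.End ℝ (Pm m)) (g : Module.End ℝ (GrassmannAlgebra n)) :
    rT m n f * lT m n g = lT m n g * rT m n f := by
  simp only [rT_apply, lT_apply, Module.End.mul_eq_comp]
  rw [LinearMap.rTensor_comp_lTensor, LinearMap.lTensor_comp_rTensor]

private lemma tensor_comm_split (f₁ f₂ : Module.End ℝ (Pm m))
    (g₁ g₂ : Module.End ℝ (GrassmannAlgebra n)) :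
    (rT m n f₁ + lT m n g₁) * (rT m n f₂ + lT m n g₂)
      - (rT m n f₂ + lT m n g₂) * (rT m n f₁ + lT m n g₁)
    = rT m n (f₁*f₂ - f₂*f₁) + lT m n (g₁*g₂ - g₂*g₁) := by
  simp only [map_sub, rT_mul, lT_mul, mul_add, add_mul, cross m n f₁ g₂, cross m n f₂ g₁]
  abel

-- identification of the statement operators
private lemma lapB_eq : lapB m n = rT m n (LbE m) := by
  rw [lapB, LbE, map_sum]
  exact Finset.sum_congr rfl fun i _ => by rw [rT_mul]; rfl

private lemma lapF_eq : lapF m n = lT m n ((-4:ℝ) • SEn n) := by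
  rw [lapF, SEn, map_smul, map_sum]
  congr 1
  exact Finset.sum_congr rfl fun j _ => by rw [lT_mul]; rfl

private lemma mulOp_tmul_one (q : MvPolynomial (Fin m) ℝ) :
    mulOp m n (q ⊗ₜ 1) = rT m n (LinearMap.mulLeft ℝ q) := by
  refine TensorProduct.ext' fun p w => ?_
  simp only [mulOp, LinearMap.mulLeft_apply, rT_apply, LinearMap.rTensor_tmul,
    Algebra.TensorProduct.tmul_mul_tmul, one_mul]

private lemma mulOp_one_tmul (g : GrassmannAlgebra n) :
    mulOp m n ((1 : MvPolynomial (Fin m) ℝ) ⊗ₜ g) = lT m n (LinearMap.mulLeft ℝ g) := by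
  refine TensorProduct.ext' fun p w => ?_
  simp only [mulOp, LinearMap.mulLeft_apply, lT_apply, LinearMap.lTensor_tmul,
    Algebra.TensorProduct.tmul_mul_tmul, one_mul]

private lemma eulerB_eq : eulerB m n = rT m n (EbE m) := by
  rw [eulerB, EbE, map_sum]
  refine Finset.sum_congr rfl fun i _ => ?_
  rw [rT_mul]
  congr 1
  · rw [show xb m n i = (MvPolynomial.X i : MvPolynomial (Fin m) ℝ) ⊗ₜ 1 from rfl,
      mulOp_tmul_one]
    rfl

private lemma eulerF_eq : eulerF m n = lT m n (EfE n) := by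
  rw [eulerF, EfE, map_sum]
  refine Finset.sum_congr rfl fun j _ => ?_
  rw [lT_mul]
  congr 1
  · rw [show xf m n j = (1 : MvPolynomial (Fin m) ℝ) ⊗ₜ gen n j from rfl, mulOp_one_tmul]
    rfl

private lemma mulOp_add (a b : SuperPoly m n) : mulOp m n (a + b) = mulOp m n a + mulOp m n b := by
  refine LinearMap.ext fun w => ?_
  simp [mulOp, add_mul]

private lemma r2_eq : r2 m n = (∑ i, MvPolynomial.X i * MvPolynomial.X i) ⊗ₜ[ℝ]
    (1 : GrassmannAlgebra n) := by
  rw [r2, TensorProduct.sum_tmul]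
  refine Finset.sum_congr rfl fun i _ => ?_
  rw [show xb m n i = (MvPolynomial.X i : MvPolynomial (Fin m) ℝ) ⊗ₜ 1 from rfl,
    Algebra.TensorProduct.tmul_mul_tmul, one_mul]

private lemma θ2_eq : θ2 m n = (1 : MvPolynomial (Fin m) ℝ) ⊗ₜ[ℝ]
    (-∑ j : Fin n, gen n (oddIdx n j) * gen n (evenIdx n j)) := by
  rw [θ2, TensorProduct.tmul_neg, TensorProduct.tmul_sum]
  congr 1
  refine Finset.sum_congr rfl fun j _ => ?_
  rw [show xf m n (oddIdx n j) = (1 : MvPolynomial (Fin m) ℝ) ⊗ₜ gen n (oddIdx n j) from rfl,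
    show xf m n (evenIdx n j) = (1 : MvPolynomial (Fin m) ℝ) ⊗ₜ gen n (evenIdx n j) from rfl,
    Algebra.TensorProduct.tmul_mul_tmul, one_mul]

private lemma mulLeft_sumsq :
    LinearMap.mulLeft ℝ (∑ i, MvPolynomial.X i * MvPolynomial.X i
      : MvPolynomial (Fin m) ℝ) = RbE m := by
  refine LinearMap.ext fun p => ?_
  simp [RbE, Xm, LinearMap.sum_apply, Finset.sum_mul, mul_assoc]

private lemma mulLeft_theta :
    LinearMap.mulLeft ℝ (-∑ j : Fin n, gen n (oddIdx n j) * gen n (evenIdx n j))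
      = -TEn n := by
  refine LinearMap.ext fun w => ?_
  simp [TEn, gE, SuperPoly.gen, LinearMap.sum_apply, Finset.sum_mul, mul_assoc]

private lemma mulOpR2_eq : mulOp m n (R2 m n) = rT m n (RbE m) + lT m n (-TEn n) := by
  rw [R2, mulOp_add, r2_eq, θ2_eq, mulOp_tmul_one, mulOp_one_tmul, mulLeft_sumsq, mulLeft_theta]

end Transport


section Keys
open SuperPoly
variable (m n : ℕ)

private lemma lap_eq : lap m n = rT m n (LbE m) + lT m n ((-4:ℝ) • SEn n) := by
  rw [lap, lapB_eq, lapF_eq]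

private lemma euler_eq : euler m n = rT m n (EbE m) + lT m n (EfE n) := by
  rw [euler, eulerB_eq, eulerF_eq]

private lemma KeyA : lap m n * mulOp m n (R2 m n) - mulOp m n (R2 m n) * lap m n
    = (4:ℝ) • euler m n
      + (2*(m:ℝ) - 4*(n:ℝ)) • (1 : Module.End ℝ (SuperPoly m n)) := by
  rw [lap_eq, mulOpR2_eq, tensor_comm_split, PB_A]
  have hf : ((-4:ℝ) • SEn n) * (-TEn n) - (-TEn n) * ((-4:ℝ) • SEn n)
      = (4:ℝ) • (EfE n - n • (1 : Module.End ℝ (GrassmannAlgebra n))) := by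
    have e1 : SEn n * -TEn n = -(SEn n * TEn n) := by
      ext w; simp [Module.End.mul_apply]
    have e2 : -TEn n * SEn n = -(TEn n * SEn n) := by
      ext w; simp [Module.End.mul_apply]
    rw [← PF_A, smul_mul_assoc, mul_smul_comm, e1, e2, smul_sub]
    module
  rw [hf, euler_eq]
  simp only [map_add, map_smul, map_sub, map_nsmul, rT_one, lT_one]
  rw [← Nat.cast_smul_eq_nsmul ℝ (2*m) (1 : Module.End ℝ (SuperPoly m n)),
    ← Nat.cast_smul_eq_nsmul ℝ n (1 : Module.End ℝ (SuperPoly m n))]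
  push_cast
  module

private lemma KeyB : lap m n * euler m n - euler m n * lap m n = (2:ℝ) • lap m n := by
  rw [lap_eq, euler_eq, tensor_comm_split, PB_B]
  have hf : ((-4:ℝ) • SEn n) * EfE n - EfE n * ((-4:ℝ) • SEn n)
      = (-4:ℝ) • (SEn n + SEn n) := by
    rw [← PF_B, smul_mul_assoc, mul_smul_comm, smul_sub]
  rw [hf]
  simp only [map_add, map_smul]
  module

private lemma KeyC : mulOp m n (R2 m n) * euler m n - euler m n * mulOp m n (R2 m n)
    = (-2:ℝ) • mulOp m n (R2 m n) := by
  rw [mulOpR2_eq, euler_eq, tensor_comm_split, PB_C]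
  have hf : (-TEn n) * EfE n - EfE n * (-TEn n) = -(-TEn n + -TEn n) := by
    have e1 : -TEn n * EfE n = -(TEn n * EfE n) := by
      ext w; simp [Module.End.mul_apply]
    have e2 : EfE n * -TEn n = -(EfE n * TEn n) := by
      ext w; simp [Module.End.mul_apply]
    rw [← PF_C, e1, e2]
    abel
  rw [hf]
  simp only [map_add, map_smul, map_neg]
  module

end Keys

open SuperPoly in
/-- The operators −∇²/2, R²/2 and 𝔼 + M/2 realize 𝔰𝔩(2):
[∇²/2, R²/2] = 𝔼 + M/2, [∇²/2, 𝔼 + M/2] = 2·(∇²/2) and [R²/2, 𝔼 + M/2] = −2·(R²/2),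
as linear operators on 𝒫 = ℝ[x_1,…,x_m] ⊗ Λ_{2n}, where M = m − 2n. -/
theorem sl2_relations (m n : ℕ) :
    (((1:ℝ)/2) • lap m n) ∘ₗ (((1:ℝ)/2) • mulOp m n (R2 m n)) -
        (((1:ℝ)/2) • mulOp m n (R2 m n)) ∘ₗ (((1:ℝ)/2) • lap m n) =
      euler m n + (((m:ℝ) - 2*n)/2) •
        (LinearMap.id : SuperPoly m n →ₗ[ℝ] SuperPoly m n) ∧
    (((1:ℝ)/2) • lap m n) ∘ₗ
          (euler m n + (((m:ℝ) - 2*n)/2) •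
            (LinearMap.id : SuperPoly m n →ₗ[ℝ] SuperPoly m n)) -
        (euler m n + (((m:ℝ) - 2*n)/2) •
            (LinearMap.id : SuperPoly m n →ₗ[ℝ] SuperPoly m n)) ∘ₗ (((1:ℝ)/2) • lap m n) =
      (2:ℝ) • (((1:ℝ)/2) • lap m n) ∧
    (((1:ℝ)/2) • mulOp m n (R2 m n)) ∘ₗ
          (euler m n + (((m:ℝ) - 2*n)/2) •
            (LinearMap.id : SuperPoly m n →ₗ[ℝ] SuperPoly m n)) -
        (euler m n + (((m:ℝ) - 2*n)/2) •
            (LinearMap.id : SuperPoly m n →ₗ[ℝ] SuperPoly m n)) ∘ₗ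
          (((1:ℝ)/2) • mulOp m n (R2 m n)) =
      (-2:ℝ) • (((1:ℝ)/2) • mulOp m n (R2 m n)) := by
  have hA := sub_eq_iff_eq_add.mp (KeyA m n)
  have hB := sub_eq_iff_eq_add.mp (KeyB m n)
  have hC := sub_eq_iff_eq_add.mp (KeyC m n)
  refine ⟨?_, ?_, ?_⟩
  · rw [← Module.End.mul_eq_comp, ← Module.End.mul_eq_comp, ← Module.End.one_eq_id]
    simp only [smul_mul_assoc, mul_smul_comm]
    rw [hA]
    module
  · rw [← Module.End.mul_eq_comp, ← Module.End.mul_eq_comp, ← Module.End.one_eq_id]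
    simp only [mul_add, add_mul, smul_mul_assoc, mul_smul_comm, mul_one, one_mul]
    rw [hB]
    module
  · rw [← Module.End.mul_eq_comp, ← Module.End.mul_eq_comp, ← Module.End.one_eq_id]
    simp only [mul_add, add_mul, smul_mul_assoc, mul_smul_comm, mul_one, one_mul]
    rw [hC]
    module
end Boson
end AbstractRing
end
end

section
/- For 1 ≤ i ≤ m, 1 ≤ j ≤ n, 0 ≤ q ≤ n, 1 ≤ k ≤ n − q and p ≥ 0, the odd orthosymplectic operator L_{i,2j−1+m} applied to the polynomial f_{k,p,q} gives L_{i,2j−1+m}(f_{k,p,q}) = 2k (M/2 + p + q + k − 1) f_{k−1,p+1,q+1} · x_i · x`_{2j−1}. -/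
/- ## Setup: super polynomials on ℝ^{m|2n} -/

open scoped TensorProduct

noncomputable section

set_option synthInstance.maxHeartbeats 1000000
set_option maxHeartbeats 1000000

namespace SuperPoly

variable (m n : ℕ)

/-- The bosonic radius-squared polynomial. -/
def Pb : MvPolynomial (Fin m) ℝ := ∑ i : Fin m, MvPolynomial.X i * MvPolynomial.X i

/-- The fermionic θ² inside the Grassmann algebra. -/
def Th : GrassmannAlgebra n := - ∑ j : Fin n, gen n (oddIdx n j) * gen n (evenIdx n j)

lemma r2_eq : r2 m n = (Pb m) ⊗ₜ[ℝ] 1 := by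
  simp [r2, Pb, xb, Algebra.TensorProduct.tmul_mul_tmul, TensorProduct.sum_tmul]

lemma θ2_eq : θ2 m n = (1 : MvPolynomial (Fin m) ℝ) ⊗ₜ[ℝ] Th n := by
  simp [θ2, Th, xf, Algebra.TensorProduct.tmul_mul_tmul, TensorProduct.tmul_sum, TensorProduct.tmul_neg]

lemma r2_pow_mul_θ2_pow (a s : ℕ) :
    r2 m n ^ a * θ2 m n ^ s = (Pb m ^ a) ⊗ₜ[ℝ] (Th n ^ s) := by
  rw [r2_eq, θ2_eq, Algebra.TensorProduct.tmul_pow, Algebra.TensorProduct.tmul_pow,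
    Algebra.TensorProduct.tmul_mul_tmul, one_pow, one_pow, mul_one, one_mul]

end SuperPoly
namespace SuperPoly

variable (m n : ℕ)

lemma gen_anticomm (a b : Fin (2*n)) : gen n a * gen n b = - (gen n b * gen n a) :=
  eq_neg_of_add_eq_zero_left (ExteriorAlgebra.ι_add_mul_swap _ _)

lemma gen_mul_gen_mul_comm (a b c : Fin (2*n)) :
    gen n a * gen n b * gen n c = gen n c * (gen n a * gen n b) := by
  rw [mul_assoc, gen_anticomm n b c, mul_neg, ← mul_assoc, gen_anticomm n a c, neg_mul,
    neg_neg, mul_assoc]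

lemma Th_comm_gen (a : Fin (2*n)) : Th n * gen n a = gen n a * Th n := by
  unfold Th
  rw [neg_mul, mul_neg, Finset.sum_mul, Finset.mul_sum]
  congr 1
  exact Finset.sum_congr rfl fun j _ => gen_mul_gen_mul_comm n _ _ a

lemma proj_even_single_odd (j j' : Fin n) :
    (LinearMap.proj (evenIdx n j) : (Fin (2*n) → ℝ) →ₗ[ℝ] ℝ) (Pi.single (oddIdx n j') 1) = 0 := by
  rw [LinearMap.proj_apply, Pi.single_apply, if_neg]
  intro h
  have h2 := congrArg Fin.val h
  simp only [evenIdx, oddIdx] at h2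
  omega

lemma proj_even_single_even (j j' : Fin n) :
    (LinearMap.proj (evenIdx n j) : (Fin (2*n) → ℝ) →ₗ[ℝ] ℝ) (Pi.single (evenIdx n j') 1)
      = if j = j' then 1 else 0 := by
  rw [LinearMap.proj_apply, Pi.single_apply]
  congr 1
  simp only [eq_iff_iff, evenIdx, Fin.mk.injEq, Fin.ext_iff]
  omega

lemma fdLam_Th_mul (j : Fin n) (x : GrassmannAlgebra n) :
    fdLam n (evenIdx n j) (Th n * x) =
      gen n (oddIdx n j) * x + Th n * fdLam n (evenIdx n j) x := by
  unfold fdLam Th gen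
  rw [neg_mul, map_neg, Finset.sum_mul, map_sum]
  simp only [mul_assoc, CliffordAlgebra.contractLeft_ι_mul, proj_even_single_odd,
    proj_even_single_even, zero_smul, zero_sub, mul_neg, neg_neg, ite_smul, one_smul,
    mul_sub, mul_ite, mul_zero]
  rw [Finset.sum_neg_distrib, neg_neg, Finset.sum_sub_distrib,
    Finset.sum_ite_eq (Finset.univ : Finset (Fin n)) j
      (fun j' => CliffordAlgebra.ι (0 : QuadraticForm ℝ (Fin (2*n) → ℝ)) (Pi.single (oddIdx n j') (1:ℝ)) * x)]
  simp only [Finset.mem_univ, if_true]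
  rw [neg_mul, Finset.sum_mul, sub_eq_add_neg]
  simp_rw [mul_assoc]

lemma fdLam_Th_pow (j : Fin n) (s : ℕ) :
    fdLam n (evenIdx n j) (Th n ^ s) = s • (gen n (oddIdx n j) * Th n ^ (s-1)) := by
  induction s with
  | zero => simp [fdLam, CliffordAlgebra.contractLeft_one]
  | succ s ih =>
    rw [pow_succ', fdLam_Th_mul, ih, mul_smul_comm, ← mul_assoc, Th_comm_gen, mul_assoc]
    cases s with
    | zero => simp
    | succ t =>
      rw [Nat.succ_sub_one, Nat.succ_sub_one, ← pow_succ',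
        succ_nsmul (gen n (oddIdx n j) * Th n ^ (t+1)) (t+1)]
      abel

end SuperPoly
namespace SuperPoly

variable (m n : ℕ)

lemma pderiv_Pb (i : Fin m) : MvPolynomial.pderiv i (Pb m) = 2 * MvPolynomial.X i := by
  simp [Pb, MvPolynomial.pderiv_X, Pi.single_apply, Finset.mul_sum, mul_ite, mul_zero]
  rw [Finset.sum_add_distrib]
  simp [Finset.sum_ite_eq']
  ring

lemma pderiv_Pb_pow (i : Fin m) (a : ℕ) :
    MvPolynomial.pderiv i (Pb m ^ a) = (2*(a:ℝ)) • (MvPolynomial.X i * Pb m ^ (a-1)) := by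
  rw [Derivation.leibniz_pow, pderiv_Pb]
  rw [smul_eq_mul, nsmul_eq_mul]
  rw [MvPolynomial.smul_eq_C_mul, map_mul]
  push_cast [MvPolynomial.C_eq_coe_nat, map_ofNat]
  ring

lemma Db_tmul (i : Fin m) (p : MvPolynomial (Fin m) ℝ) (w : GrassmannAlgebra n) :
    Db m n i (p ⊗ₜ[ℝ] w) = (MvPolynomial.pderiv i p) ⊗ₜ[ℝ] w := rfl

lemma Df_tmul (j : Fin (2*n)) (p : MvPolynomial (Fin m) ℝ) (w : GrassmannAlgebra n) :
    Df m n j (p ⊗ₜ[ℝ] w) = p ⊗ₜ[ℝ] (fdLam n j w) := rfl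

lemma xb_mul_term (i : Fin m) (a s : ℕ) :
    xb m n i * (r2 m n ^ a * θ2 m n ^ s) = (MvPolynomial.X i * Pb m ^ a) ⊗ₜ[ℝ] (Th n ^ s) := by
  rw [r2_pow_mul_θ2_pow, xb, Algebra.TensorProduct.tmul_mul_tmul, one_mul]

lemma xf_mul_term (j : Fin (2*n)) (a s : ℕ) :
    xf m n j * (r2 m n ^ a * θ2 m n ^ s) = (Pb m ^ a) ⊗ₜ[ℝ] (gen n j * Th n ^ s) := by
  rw [r2_pow_mul_θ2_pow, xf, Algebra.TensorProduct.tmul_mul_tmul, one_mul]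

lemma Db_term (i : Fin m) (a s : ℕ) :
    Db m n i (r2 m n ^ a * θ2 m n ^ s)
      = (2*(a:ℝ)) • (xb m n i * (r2 m n ^ (a-1) * θ2 m n ^ s)) := by
  rw [r2_pow_mul_θ2_pow, Db_tmul, pderiv_Pb_pow, xb_mul_term, TensorProduct.smul_tmul']

lemma Df_term (j : Fin n) (a s : ℕ) :
    Df m n (evenIdx n j) (r2 m n ^ a * θ2 m n ^ s)
      = (s:ℝ) • (xf m n (oddIdx n j) * (r2 m n ^ a * θ2 m n ^ (s-1))) := by
  rw [r2_pow_mul_θ2_pow, Df_tmul, fdLam_Th_pow, xf_mul_term, TensorProduct.tmul_smul,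
    ← Nat.cast_smul_eq_nsmul ℝ]

end SuperPoly
namespace SuperPoly

variable (m n : ℕ)

lemma nabla_bos (i : Fin m) :
    nabla m n ⟨i.1, by have := i.2; omega⟩ = Db m n i := by
  unfold nabla
  rw [Finset.sum_eq_single (⟨i.1, by have := i.2; omega⟩ : Fin (m + 2*n))]
  · have h1 : ginv m n ⟨i.1, by have := i.2; omega⟩ ⟨i.1, by have := i.2; omega⟩ = 1 := by
      have := i.2
      simp only [ginv]
      rw [if_pos ⟨this, this⟩]
      simp
    have h2 : sgn m n ⟨i.1, by have := i.2; omega⟩ = 1 := by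
      have := i.2; simp only [sgn]; rw [if_pos this]
    have h3 : DX m n ⟨i.1, by have := i.2; omega⟩ = Db m n i := by
      have := i.2; simp only [DX]; rw [dif_pos this]
    rw [h1, h2, h3, one_mul, one_smul]
  · intro b _ hb
    have hbv : b.1 ≠ i.1 := fun h => hb (Fin.ext h)
    have : ginv m n b ⟨i.1, by have := i.2; omega⟩ = 0 := by
      have hi := i.2
      simp only [ginv]
      split_ifs with h1 h2 <;> first | rfl | (exfalso; revert h1; (try dsimp only); omega) | (exfalso; revert h2; (try dsimp only); omega)
    rw [this, zero_mul, zero_smul]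
  · intro h; exact absurd (Finset.mem_univ _) h

lemma nabla_ferm (j : Fin n) :
    nabla m n ⟨m + 2*j.1, by have := j.2; omega⟩ = (2:ℝ) • Df m n (evenIdx n j) := by
  have hj := j.2
  unfold nabla
  rw [Finset.sum_eq_single (⟨m + 2*j.1 + 1, by omega⟩ : Fin (m + 2*n))]
  · have h1 : ginv m n ⟨m + 2*j.1 + 1, by omega⟩ ⟨m + 2*j.1, by omega⟩ = -2 := by
      simp only [ginv]
      split_ifs <;> simp -failIfUnchanged only [true_and, Fin.val_mk] at * <;> first | rfl | (exfalso; omega)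
    have h2 : sgn m n ⟨m + 2*j.1 + 1, by omega⟩ = -1 := by
      simp only [sgn]; rw [if_neg (by (try dsimp only); omega)]
    have h3 : DX m n ⟨m + 2*j.1 + 1, by omega⟩ = Df m n (evenIdx n j) := by
      simp only [DX]; rw [dif_neg (by (try dsimp only); omega)]
      congr 1
      simp only [evenIdx, Fin.mk.injEq]
      omega
    rw [h1, h2, h3]
    norm_num
  · intro b _ hb
    have hbv : b.1 ≠ m + 2*j.1 + 1 := fun h => hb (Fin.ext h)
    have : ginv m n b ⟨m + 2*j.1, by omega⟩ = 0 := by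
      simp only [ginv]
      split_ifs with h1 h2 h3 h4 <;> first | rfl | (exfalso; revert h1; (try dsimp only); omega) | (exfalso; omega) | (exfalso; revert h2 h3; (try dsimp only); omega) | (exfalso; revert h2 h4; (try dsimp only); omega)
    rw [this, zero_mul, zero_smul]
  · intro h; exact absurd (Finset.mem_univ _) h

lemma Lop_apply (i : Fin m) (j : Fin n) (f : SuperPoly m n) :
    Lop m n ⟨i.1, by have := i.2; omega⟩ ⟨m + 2*j.1, by have := j.2; omega⟩ f =
      (2:ℝ) • (xb m n i * Df m n (evenIdx n j) f) - xf m n (oddIdx n j) * Db m n i f := by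
  have hi := i.2
  have hj := j.2
  have hs : sgn2 m n ⟨i.1, by omega⟩ ⟨m + 2*j.1, by omega⟩ = 1 := by
    simp only [sgn2]; rw [if_neg (by (try dsimp only); omega)]
  have hX1 : XV m n ⟨i.1, by omega⟩ = xb m n i := by
    simp only [XV]; rw [dif_pos hi]
  have hX2 : XV m n ⟨m + 2*j.1, by omega⟩ = xf m n (oddIdx n j) := by
    simp only [XV]; rw [dif_neg (by (try dsimp only); omega)]
    congr 1
    simp only [oddIdx, Fin.mk.injEq]
    omega
  simp only [Lop, LinearMap.sub_apply, LinearMap.smul_apply, LinearMap.comp_apply,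
    nabla_bos, nabla_ferm, hs, one_smul, hX1, hX2, mulOp, LinearMap.mulLeft_apply,
    map_smul, mul_smul_comm]

end SuperPoly
namespace SuperPoly

lemma acoef_rec (m n k p q t : ℕ) (hm : 1 ≤ m) (hq : q ≤ n) (hk1 : 1 ≤ k)
    (hk : k ≤ n - q) (ht : t < k) :
    2*((t:ℝ)+1) * acoef m n k p q (t+1) - 2*((k:ℝ)-t) * acoef m n k p q t
      = (2*(k:ℝ) * (((m:ℝ)-2*n)/2 + p + q + k - 1)) * acoef m n (k-1) (p+1) (q+1) t := by
  have hm' : (1:ℝ) ≤ (m:ℝ) := by exact_mod_cast hm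
  have ht' : (t:ℝ) + 1 ≤ (k:ℝ) := by exact_mod_cast ht
  have hk' : (1:ℝ) ≤ (k:ℝ) := by exact_mod_cast hk1
  unfold acoef
  set c : ℝ := (m:ℝ)/2 + (p:ℝ) + (k:ℝ) with hc
  have harg2 : (m:ℝ)/2 + (p:ℝ) + (k:ℝ) - ((t+1 : ℕ):ℝ) = c - t - 1 := by
    rw [hc]; push_cast; ring
  have harg3 : (m:ℝ)/2 + ((p+1 : ℕ):ℝ) + ((k-1 : ℕ):ℝ) = c := by
    rw [hc]; push_cast [Nat.cast_sub hk1]; ring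
  have harg4 : (m:ℝ)/2 + ((p+1 : ℕ):ℝ) + ((k-1 : ℕ):ℝ) - (t:ℝ) = c - t := by
    rw [hc]; push_cast [Nat.cast_sub hk1]; ring
  rw [harg2, harg3]
  have e0 : n - q - (t+1) = n - q - t - 1 := by omega
  rw [e0]
  have e1 : n - (q+1) - t = n - q - t - 1 := by omega
  have e2 : n - (q+1) - (k-1) = n - q - k := by omega
  rw [e1, e2]
  have hfact : (((n-q-t).factorial : ℕ) : ℝ)
      = ((n:ℝ)-q-t) * (((n-q-t-1).factorial : ℕ) : ℝ) := by
    have h1 : n - q - t = (n-q-t-1)+1 := by omega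
    have h2 : ((n-q-t : ℕ) : ℝ) = (n:ℝ)-q-t := by
      have h3 : n - q - t = n - (q+t) := by omega
      rw [h3, Nat.cast_sub (by omega : q + t ≤ n)]; push_cast; ring
    rw [h1, Nat.factorial_succ, ← h1]
    push_cast [h2]
    try ring
  have hpos : 0 < c - t - 1 := by
    rw [hc]
    have : (0:ℝ) ≤ (p:ℝ) := Nat.cast_nonneg p
    linarith
  have hΓ2 : Real.Gamma (c - t - 1) ≠ 0 :=
    ne_of_gt (Real.Gamma_pos_of_pos hpos)
  have hΓ : Real.Gamma (c - t) = (c - t - 1) * Real.Gamma (c - t - 1) := by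
    have h := Real.Gamma_add_one (ne_of_gt hpos)
    rw [show c - t - 1 + 1 = c - t by ring] at h
    exact h
  have hch1 : ((k.choose (t+1) : ℕ) : ℝ)
      = (k.choose t : ℝ) * ((k:ℝ)-t) / ((t:ℝ)+1) := by
    have h := Nat.choose_succ_right_eq k t
    have h' : ((k.choose (t+1) * (t+1) : ℕ) : ℝ) = ((k.choose t * (k - t) : ℕ) : ℝ) := by
      exact_mod_cast congrArg (Nat.cast : ℕ → ℝ) h
    push_cast [Nat.cast_sub (le_of_lt ht)] at h'
    field_simp
    linarith [h']
  have hch2 : (((k-1).choose t : ℕ) : ℝ)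
      = (k.choose t : ℝ) * ((k:ℝ)-t) / (k:ℝ) := by
    have h := Nat.add_one_mul_choose_eq (k-1) t
    rw [Nat.sub_add_cancel hk1] at h
    have h' : ((k * (k-1).choose t : ℕ) : ℝ) = ((k.choose (t+1) * (t+1) : ℕ) : ℝ) := by
      exact_mod_cast congrArg (Nat.cast : ℕ → ℝ) h
    push_cast at h'
    rw [hch1] at h'
    have htpos : ((t:ℝ)+1) ≠ 0 := by positivity
    field_simp at h'
    field_simp
    linarith [h']
  rw [hfact, hΓ, hch1, hch2]
  have hf2 : (((n-q-k).factorial : ℕ) : ℝ) ≠ 0 := by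
    exact_mod_cast Nat.factorial_ne_zero _
  have hkne : (k:ℝ) ≠ 0 := by linarith
  have htne : ((t:ℝ)+1) ≠ 0 := by positivity
  field_simp
  rw [hc]
  ring

end SuperPoly

namespace SuperPoly

variable (m n : ℕ)

lemma Th_pow_comm_gen (a : Fin (2*n)) (s : ℕ) : Th n ^ s * gen n a = gen n a * Th n ^ s :=
  ((Commute.symm (Th_comm_gen n a)).pow_right s).symm.eq

lemma T1 (i : Fin m) (j : Fin n) (a s : ℕ) :
    xb m n i * (xf m n (oddIdx n j) * (r2 m n ^ a * θ2 m n ^ s))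
      = (MvPolynomial.X i * Pb m ^ a) ⊗ₜ[ℝ] (gen n (oddIdx n j) * Th n ^ s) := by
  rw [xf_mul_term, xb, Algebra.TensorProduct.tmul_mul_tmul, one_mul]

lemma T2 (i : Fin m) (j : Fin n) (a s : ℕ) :
    xf m n (oddIdx n j) * (xb m n i * (r2 m n ^ a * θ2 m n ^ s))
      = (MvPolynomial.X i * Pb m ^ a) ⊗ₜ[ℝ] (gen n (oddIdx n j) * Th n ^ s) := by
  rw [xb_mul_term, xf, Algebra.TensorProduct.tmul_mul_tmul, one_mul]

lemma T3 (i : Fin m) (j : Fin n) (a s : ℕ) :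
    r2 m n ^ a * θ2 m n ^ s * xb m n i * xf m n (oddIdx n j)
      = (MvPolynomial.X i * Pb m ^ a) ⊗ₜ[ℝ] (gen n (oddIdx n j) * Th n ^ s) := by
  rw [r2_pow_mul_θ2_pow, xb, xf, Algebra.TensorProduct.tmul_mul_tmul,
    Algebra.TensorProduct.tmul_mul_tmul, mul_one, mul_one, Th_pow_comm_gen,
    mul_comm (Pb m ^ a) (MvPolynomial.X i)]

end SuperPoly


open SuperPoly in
/-- For 1 ≤ i ≤ m, 1 ≤ j ≤ n, 0 ≤ q ≤ n, 1 ≤ k ≤ n−q and p ≥ 0, the odd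
orthosymplectic operator L_{i,2j−1+m} satisfies
L_{i,2j−1+m}(f_{k,p,q}) = 2k(M/2+p+q+k−1) f_{k−1,p+1,q+1}·x_i·x`_{2j−1}. -/
theorem Lop_fkpq (m n : ℕ) (hm : 1 ≤ m) (k p q : ℕ) (hq : q ≤ n) (hk1 : 1 ≤ k)
    (hk : k ≤ n - q) (i : Fin m) (j : Fin n) :
    Lop m n ⟨i.1, by have := i.2; omega⟩ ⟨m + 2*j.1, by have := j.2; omega⟩
        (fkpq m n k p q) =
      ((2*k : ℝ) * (((m:ℝ) - 2*n)/2 + p + q + k - 1)) •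
        (fkpq m n (k-1) (p+1) (q+1) * xb m n i * xf m n (oddIdx n j)) := by
  rw [Lop_apply]
  unfold fkpq
  rw [Nat.sub_add_cancel hk1]
  rw [map_sum, map_sum]
  simp only [map_smul, Df_term, Db_term, smul_smul, Finset.mul_sum, mul_smul_comm,
    Finset.smul_sum, T1, T2, T3, Finset.sum_mul, smul_mul_assoc]
  rw [Finset.sum_range_succ' _ k, Finset.sum_range_succ]
  simp only [Nat.cast_zero, mul_zero, zero_mul, zero_smul, add_zero, Nat.sub_self,
    Nat.add_sub_cancel]
  rw [← Finset.sum_sub_distrib]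
  refine Finset.sum_congr rfl fun t ht => ?_
  have htk : t < k := Finset.mem_range.mp ht
  rw [show k - (t+1) = k-1-t from by omega, show k - t - 1 = k-1-t from by omega,
    ← sub_smul]
  congr 1
  have hcast : ((k - t : ℕ) : ℝ) = (k:ℝ) - t := Nat.cast_sub (le_of_lt htk)
  have hrec := acoef_rec m n k p q t hm hq hk1 hk htk
  rw [hcast]
  push_cast
  linarith [hrec]
end
end
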